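/- Let G be a finite simple undirected graph with threshold function τ : V(G) → ℕ satisfying τ(v) ≤ deg(v) for every vertex v. Let C = {v₁, …, v_t} be a vertex cover of G and B = V(G) \ C. Let T : C → ℕ be any function, and extend T to B by setting, for u ∈ B, T(u) = 1 + min{x ∈ ℕ : |{c ∈ N(u) : T(c) ≤ x}| ≥ τ(u)}. For each i ∈ {1,…,t} define Sᵢ = {w ∈ N(vᵢ) ∩ B : T(w) ≥ T(vᵢ)} and lᵢ = max(0, τ(vᵢ) − |{w ∈ N(vᵢ) : T(w) < T(vᵢ)}|). If H ⊆ B satisfies |H ∩ Sᵢ| ≥ lᵢ for every i ∈ {1,…,t}, then H ∪ {v ∈ C : T(v) = 0} is a target set of G. -/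
import Mathlib


open scoped Classical

/-- The neighborhood of `u` in `G`, as a finset. -/
noncomputable def nbrs {V : Type*} [Fintype V] (G : SimpleGraph V) (u : V) : Finset V :=
  Finset.univ.filter (fun w => G.Adj u w)

/-- The diffusion process: `diffusion G τ S i` is the set `A[S,i]` of vertices
active after `i` rounds starting from seed set `S`. -/
noncomputable def diffusion {V : Type*} [Fintype V] (G : SimpleGraph V) (τ : V → ℕ)
    (S : Finset V) : ℕ → Finset V
  | 0 => S
  | (i + 1) => diffusion G τ S i ∪
      Finset.univ.filter (fun u => τ u ≤ (nbrs G u ∩ diffusion G τ S i).card)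

/-- The influence of a seed set `S`: all vertices eventually activated. -/
def influence {V : Type*} [Fintype V] (G : SimpleGraph V) (τ : V → ℕ) (S : Finset V) : Set V :=
  {v | ∃ i, v ∈ diffusion G τ S i}

/-- `S` is a target set if its influence is the whole vertex set. -/
def isTargetSet {V : Type*} [Fintype V] (G : SimpleGraph V) (τ : V → ℕ) (S : Finset V) : Prop :=
  influence G τ S = Set.univ

/-- `C` is a vertex cover of `G`. -/
def isVertexCover {V : Type*} [Fintype V] (G : SimpleGraph V) (C : Finset V) : Prop :=
  ∀ u v, G.Adj u v → u ∈ C ∨ v ∈ C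

lemma diffusion_mono {V : Type*} [Fintype V] (G : SimpleGraph V) (τ : V → ℕ)
    (S : Finset V) {i j : ℕ} (h : i ≤ j) : diffusion G τ S i ⊆ diffusion G τ S j := by
  induction j with
  | zero => simpa [Nat.le_zero.mp h] using Finset.Subset.refl _
  | succ j ih =>
    rcases Nat.lt_or_ge i (j + 1) with h' | h'
    · exact (ih (Nat.lt_succ_iff.mp h')).trans
        (show diffusion G τ S j ⊆ diffusion G τ S (j + 1) from Finset.subset_union_left)
    · have : i = j + 1 := le_antisymm h h'
      subst this; exact Finset.Subset.refl _

lemma mem_influence_of_card {V : Type*} [Fintype V] (G : SimpleGraph V) (τ : V → ℕ)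
    (S : Finset V) (v : V)
    (h : τ v ≤ ((nbrs G v).filter (fun w => w ∈ influence G τ S)).card) :
    v ∈ influence G τ S := by
  classical
  set F := (nbrs G v).filter (fun w => w ∈ influence G τ S) with hF
  have hmem : ∀ w ∈ F, ∃ i, w ∈ diffusion G τ S i := fun w hw =>
    (Finset.mem_filter.mp hw).2
  choose f hf using hmem
  set N := F.attach.sup (fun w => f w.1 w.2) with hN
  have hsub : F ⊆ nbrs G v ∩ diffusion G τ S N := by
    intro w hw
    refine Finset.mem_inter.mpr ⟨(Finset.mem_filter.mp hw).1, ?_⟩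
    exact diffusion_mono G τ S (Finset.le_sup (f := fun w => f w.1 w.2)
      (Finset.mem_attach F ⟨w, hw⟩)) (hf w hw)
  refine ⟨N + 1, ?_⟩
  show v ∈ diffusion G τ S N ∪
      Finset.univ.filter (fun u => τ u ≤ (nbrs G u ∩ diffusion G τ S N).card)
  exact Finset.mem_union_right _ (Finset.mem_filter.mpr
    ⟨Finset.mem_univ _, h.trans (Finset.card_le_card hsub)⟩)

/-- If `H ⊆ B = V \ C` hits each set `Sᵢ` in at least `lᵢ` elements, then
`H ∪ {v ∈ C : T v = 0}` is a target set of `G`. -/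
theorem multiHittingSet_gives_targetSet {V : Type*} [Fintype V] (G : SimpleGraph V) (τ : V → ℕ)
    (hτ : ∀ v, τ v ≤ (nbrs G v).card)
    (C : Finset V) (hC : isVertexCover G C)
    (T : V → ℕ)
    (hTB : ∀ u ∉ C, T u = 1 + sInf {x | τ u ≤ ((nbrs G u).filter (fun c => T c ≤ x)).card})
    (H : Finset V) (hH : ∀ u ∈ H, u ∉ C)
    (hhit : ∀ v ∈ C,
      τ v - ((nbrs G v).filter (fun w => T w < T v)).card ≤
        (H ∩ (nbrs G v).filter (fun w => w ∉ C ∧ T v ≤ T w)).card) :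
    isTargetSet G τ (H ∪ C.filter (fun v => T v = 0)) := by
  classical
  set S : Finset V := H ∪ C.filter (fun v => T v = 0) with hS
  have hseed : ∀ v ∈ S, v ∈ influence G τ S := fun v hv => ⟨0, hv⟩
  have main : ∀ n v, T v < n → v ∈ influence G τ S := by
    intro n
    induction n with
    | zero => intro v hv; omega
    | succ n ih =>
      intro v hv
      by_cases hvC : v ∈ C
      · by_cases hT0 : T v = 0
        · exact hseed v (Finset.mem_union_right _ (Finset.mem_filter.mpr ⟨hvC, hT0⟩))
        · apply mem_influence_of_card
          have key := hhit v hvC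
          set A₁ := (nbrs G v).filter (fun w => T w < T v) with hA₁
          set A₂ := H ∩ (nbrs G v).filter (fun w => w ∉ C ∧ T v ≤ T w) with hA₂
          have hdisj : Disjoint A₁ A₂ := by
            rw [Finset.disjoint_left]
            intro w h1 h2
            have h1' := (Finset.mem_filter.mp h1).2
            have h2' := (Finset.mem_filter.mp (Finset.mem_inter.mp h2).2).2.2
            omega
          have hsub : A₁ ∪ A₂ ⊆ (nbrs G v).filter (fun w => w ∈ influence G τ S) := by
            intro w hw
            rcases Finset.mem_union.mp hw with h | h
            · obtain ⟨hn, hlt⟩ := Finset.mem_filter.mp h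
              exact Finset.mem_filter.mpr ⟨hn, ih w (by omega)⟩
            · obtain ⟨hH', hn⟩ := Finset.mem_inter.mp h
              exact Finset.mem_filter.mpr ⟨(Finset.mem_filter.mp hn).1,
                hseed w (Finset.mem_union_left _ hH')⟩
          calc τ v ≤ A₁.card + A₂.card := by omega
            _ = (A₁ ∪ A₂).card := (Finset.card_union_of_disjoint hdisj).symm
            _ ≤ _ := Finset.card_le_card hsub
      · have hT := hTB v hvC
        set P := {x | τ v ≤ ((nbrs G v).filter (fun c => T c ≤ x)).card} with hP
        have hne : P.Nonempty := by
          refine ⟨(nbrs G v).sup T, ?_⟩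
          have heq : (nbrs G v).filter (fun c => T c ≤ (nbrs G v).sup T) = nbrs G v :=
            Finset.filter_true_of_mem (fun c hc => Finset.le_sup hc)
          show τ v ≤ _
          rw [heq]; exact hτ v
        have hm : τ v ≤ ((nbrs G v).filter (fun c => T c ≤ sInf P)).card := Nat.sInf_mem hne
        apply mem_influence_of_card
        refine hm.trans (Finset.card_le_card ?_)
        intro c hc
        obtain ⟨hn, hle⟩ := Finset.mem_filter.mp hc
        refine Finset.mem_filter.mpr ⟨hn, ih c ?_⟩
        have : T c < T v := by rw [hT]; omega
        omega
  rw [isTargetSet, Set.eq_univ_iff_forall]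
  exact fun v => main (T v + 1) v (Nat.lt_succ_self _)
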